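/- Let (X,Y) be a source with X binary and Bhattacharyya parameter Z(X|Y) = 2·Σ_y P_Y(y)·√(P_{X|Y}(0|y)·P_{X|Y}(1|y)). If (X₁,Y₁),(X₂,Y₂) are two independent copies of (X,Y), then Z(X₂ | Y₁,Y₂, X₁⊕X₂) = Z(X|Y)², where the conditional Bhattacharyya parameter of X₂ given the pair (Y₁,Y₂,X₁⊕X₂) is defined analogously by summing over all values of the conditioning variables. -/

import Mathlib

set_option maxHeartbeats 800000


/-- Conditional source Bhattacharyya parameter
`Z(X|W) = 2 Σ_w √(q(0,w) q(1,w))` for a joint pmf `q x w` with binary `x`. -/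
noncomputable def bhat {β : Type*} (q : Bool → β → ℝ) : ℝ :=
  2 * ∑' w : β, Real.sqrt (q false w * q true w)

/-- `Z(X₂ | Y₁,Y₂, X₁ ⊕ X₂) = Z(X|Y)²`. -/
theorem stmt4 (p : Bool → ℕ → ℝ) (hp : ∀ x y, 0 ≤ p x y)
    (hsum : HasSum (fun z : Bool × ℕ => p z.1 z.2) 1) :
    bhat (fun (u₂ : Bool) (w : ℕ × ℕ × Bool) =>
        p (xor w.2.2 u₂) w.1 * p u₂ w.2.1) = (bhat p) ^ 2 := by
  set f : ℕ → ℝ := fun y => Real.sqrt (p false y * p true y) with hf_def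
  have hf0 : ∀ y, 0 ≤ f y := fun y => Real.sqrt_nonneg _
  have hsumF : Summable (fun y => p false y) := by
    have := hsum.summable.comp_injective
      (i := fun y : ℕ => ((false, y) : Bool × ℕ))
      (by intro a b h; simpa using h)
    exact this
  have hsumT : Summable (fun y => p true y) := by
    have := hsum.summable.comp_injective
      (i := fun y : ℕ => ((true, y) : Bool × ℕ))
      (by intro a b h; simpa using h)
    exact this
  have hf_sum : Summable f := by
    refine Summable.of_nonneg_of_le hf0 (fun y => ?_) (hsumF.add hsumT)
    have h1 : p false y * p true y ≤ (p false y + p true y) ^ 2 := by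
      nlinarith [hp false y, hp true y]
    calc f y ≤ Real.sqrt ((p false y + p true y) ^ 2) := Real.sqrt_le_sqrt h1
      _ = p false y + p true y := Real.sqrt_sq (add_nonneg (hp _ _) (hp _ _))
  set S : ℝ := ∑' y, f y with hS_def
  have hmul : Summable (fun x : ℕ × ℕ => f x.1 * f x.2) :=
    hf_sum.mul_of_nonneg hf_sum hf0 hf0
  have hSS : HasSum (fun x : ℕ × ℕ => f x.1 * f x.2) (S * S) :=
    hf_sum.hasSum.mul hf_sum.hasSum hmul
  -- sum with an extra Bool factor
  have hBool : HasSum (fun _ : Bool => (1 : ℝ)) 2 := by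
    have := hasSum_fintype (fun _ : Bool => (1 : ℝ))
    simpa using this
  have hmul2 : Summable (fun u : (ℕ × ℕ) × Bool => (f u.1.1 * f u.1.2) * 1) :=
    hmul.mul_of_nonneg (Summable.of_finite) (fun x => mul_nonneg (hf0 _) (hf0 _))
      (fun _ => zero_le_one)
  have hG : HasSum (fun u : (ℕ × ℕ) × Bool => f u.1.1 * f u.1.2) (2 * (S * S)) := by
    have := hSS.mul hBool hmul2
    simpa [mul_comm] using this
  have hW : HasSum (fun w : ℕ × ℕ × Bool => f w.1 * f w.2.1) (2 * (S * S)) := by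
    have := (Equiv.prodAssoc ℕ ℕ Bool).hasSum_iff
      (f := fun w : ℕ × ℕ × Bool => f w.1 * f w.2.1) (a := 2 * (S * S))
    exact this.mp hG
  have hterm : ∀ w : ℕ × ℕ × Bool,
      Real.sqrt ((p (xor w.2.2 false) w.1 * p false w.2.1) *
        (p (xor w.2.2 true) w.1 * p true w.2.1)) = f w.1 * f w.2.1 := by
    rintro ⟨y1, y2, s⟩
    cases s <;>
    · simp only [Bool.xor_false, Bool.xor_true, Bool.not_false, Bool.not_true]
      rw [mul_mul_mul_comm, Real.sqrt_mul (mul_nonneg (hp _ _) (hp _ _))]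
      try simp [hf_def, mul_comm]
  rw [bhat, bhat]
  rw [tsum_congr hterm, hW.tsum_eq]
  ring
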